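/- The sequence v_n := 2n·[Λ(π/4 + π/(2n)) + Λ(π/4 - π/(2n))] is strictly increasing in n for n ≥ 3. -/

import Mathlib

open Real MeasureTheory Set intervalIntegral

noncomputable def Λ (θ : ℝ) : ℝ := -∫ t in (0:ℝ)..θ, Real.log |2 * Real.sin t|

namespace AntiprismAux

noncomputable def L (t : ℝ) : ℝ := Real.log |2 * Real.sin t|

/-- antiderivative of log (2 t) -/
noncomputable def A (t : ℝ) : ℝ := Real.log 2 * t - Real.negMulLog t - t

lemma contA : Continuous A := by
  unfold A
  fun_prop

lemma hasDerivAt_A {t : ℝ} (ht : t ≠ 0) : HasDerivAt A (Real.log (2 * t)) t := by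
  have h1 : HasDerivAt A (Real.log 2 * 1 - (-Real.log t - 1) - 1) t :=
    (((hasDerivAt_id t).const_mul (Real.log 2)).sub
      (Real.hasDerivAt_negMulLog ht)).sub (hasDerivAt_id t)
  convert h1 using 1
  rw [Real.log_mul two_ne_zero ht]; ring

lemma intInt_log2t {b : ℝ} (hb : 0 < b) :
    IntervalIntegrable (fun t => Real.log (2 * t)) volume 0 b := by
  have baseneg : IntervalIntegrable (fun t => -Real.log (2 * t)) volume 0 (1/2) := by
    refine intervalIntegrable_deriv_of_nonneg (g := fun t => -A t) contA.neg.continuousOn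
      (fun x hx => ?_) (fun x hx => ?_)
    · norm_num at hx
      exact (hasDerivAt_A (ne_of_gt hx.1)).neg
    · norm_num at hx
      have h1 : 2 * x < 1 := by linarith [hx.2]
      have h0 : 0 < 2 * x := by linarith [hx.1]
      simp only [neg_nonneg]
      exact le_of_lt (Real.log_neg h0 h1)
  have base : IntervalIntegrable (fun t => Real.log (2 * t)) volume 0 (1/2) := by
    have heq : (fun t : ℝ => Real.log (2 * t)) = -(fun t : ℝ => -Real.log (2 * t)) := by
      funext t; simp
    rw [heq]; exact baseneg.neg
  rcases le_total b (1/2) with h | h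
  · refine base.mono_set ?_
    rw [uIcc_of_le hb.le, uIcc_of_le (by norm_num : (0:ℝ) ≤ 1/2)]
    exact Icc_subset_Icc le_rfl h
  · refine base.trans ?_
    refine ContinuousOn.intervalIntegrable ?_
    intro t ht
    rw [uIcc_of_le h] at ht
    have h0 : (0:ℝ) < 2 * t := by
      have := ht.1; linarith
    exact ((Real.continuousAt_log (ne_of_gt h0)).comp
      (by fun_prop : ContinuousAt (fun t : ℝ => 2 * t) t)).continuousWithinAt

lemma contOn_logsindiv {b : ℝ} (hb : 0 < b) (hb2 : b ≤ π/2) :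
    ContinuousOn (fun t => Real.log (Real.sin t / t)) (Icc 0 b) := by
  intro t ht
  rcases eq_or_lt_of_le ht.1 with h0 | h0
  · subst h0
    rw [← continuousWithinAt_diff_self]
    have key : Filter.Tendsto (fun t : ℝ => Real.log (Real.sin t / t))
        (nhdsWithin 0 {(0:ℝ)}ᶜ) (nhds (Real.log (Real.sin 0 / 0))) := by
      rw [show Real.log (Real.sin 0 / 0) = Real.log 1 by simp]
      refine (Real.continuousAt_log one_ne_zero).tendsto.comp ?_
      have h := Real.hasDerivAt_sin 0
      rw [hasDerivAt_iff_tendsto_slope] at h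
      simp only [Real.cos_zero] at h
      refine h.congr fun y => ?_
      simp [slope_fun_def]
      ring
    exact key.mono_left (nhdsWithin_mono _ fun x hx => hx.2)
  · have hs : 0 < Real.sin t := Real.sin_pos_of_pos_of_lt_pi h0
      (lt_of_le_of_lt ht.2 (by linarith [Real.pi_pos]))
    exact (((Real.continuous_sin.continuousAt).div continuousAt_id
      (ne_of_gt h0)).log (ne_of_gt (div_pos hs h0))).continuousWithinAt

lemma intInt_L {b : ℝ} (hb : 0 < b) (hb2 : b ≤ π/2) :
    IntervalIntegrable L volume 0 b := by
  have h1 : IntervalIntegrable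
      (fun t => Real.log (2 * t) + Real.log (Real.sin t / t)) volume 0 b :=
    (intInt_log2t hb).add (((contOn_logsindiv hb hb2).mono
      (by rw [uIcc_of_le hb.le])).intervalIntegrable)
  refine h1.congr ?_
  rw [uIoc_of_le hb.le]
  intro t ht
  have h0 : 0 < t := ht.1
  have hs : 0 < Real.sin t := Real.sin_pos_of_pos_of_lt_pi h0
    (lt_of_le_of_lt ht.2 (by linarith [Real.pi_pos]))
  show Real.log (2 * t) + Real.log (Real.sin t / t) = L t
  unfold L
  rw [abs_of_pos (by linarith : (0:ℝ) < 2 * Real.sin t),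
    ← Real.log_mul (by positivity) (ne_of_gt (div_pos hs h0))]
  congr 1
  field_simp

lemma hasDerivAt_Lambda {θ : ℝ} (h1 : 0 < θ) (h2 : θ < π/2) :
    HasDerivAt Λ (-Real.log (2 * Real.sin θ)) θ := by
  have hs : 0 < Real.sin θ := Real.sin_pos_of_pos_of_lt_pi h1 (by linarith [Real.pi_pos])
  have habs : |2 * Real.sin θ| ≠ 0 := by
    rw [abs_ne_zero]; positivity
  have hcont : ContinuousAt L θ := by
    have hc : ContinuousAt (fun t : ℝ => |2 * Real.sin t|) θ := by fun_prop
    exact hc.log habs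
  have hmeas : StronglyMeasurableAtFilter L (nhds θ) volume := by
    have : Measurable L := Real.measurable_log.comp ((Real.measurable_sin.const_mul 2).abs)
    exact this.aestronglyMeasurable.stronglyMeasurableAtFilter
  have key := intervalIntegral.integral_hasDerivAt_right (intInt_L h1 h2.le) hmeas hcont
  have key2 : HasDerivAt Λ (-(L θ)) θ := key.neg
  rwa [show L θ = Real.log (2 * Real.sin θ) by rw [L, abs_of_pos (by positivity)]] at key2

lemma lambda_quarter_pos : 0 < Λ (π/4) := by
  have hq : 0 < π/4 := by positivity
  have hmono : ∫ t in (0:ℝ)..(π/4), L t ≤ ∫ t in (0:ℝ)..(π/4), Real.log (2*t) := by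
    apply intervalIntegral.integral_mono_on hq.le (intInt_L hq (by linarith [Real.pi_pos]))
      (intInt_log2t hq)
    intro t ht
    rcases eq_or_lt_of_le ht.1 with h0 | h0
    · rw [← h0]; simp [L]
    · have hs : 0 < Real.sin t := Real.sin_pos_of_pos_of_lt_pi h0
        (by nlinarith [Real.pi_gt_three, ht.2])
      have hlt : Real.sin t < t := Real.sin_lt h0
      rw [L, abs_of_pos (by positivity)]
      rw [Real.log_le_log_iff (by positivity) (by positivity)]
      linarith
  have hcalc : ∫ t in (0:ℝ)..(π/4), Real.log (2*t) = A (π/4) - A 0 :=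
    intervalIntegral.integral_eq_sub_of_hasDeriv_right_of_le hq.le contA.continuousOn
      (fun x hx => (hasDerivAt_A (ne_of_gt hx.1)).hasDerivWithinAt) (intInt_log2t hq)
  have hA0 : A 0 = 0 := by simp [A]
  have hlog : Real.log (π/2) < 1 := by
    rw [Real.log_lt_iff_lt_exp (by positivity)]
    have h1 := Real.exp_one_gt_d9
    have h2 := Real.pi_lt_d2
    linarith
  have hlogsplit : Real.log 2 + Real.log (π/4) = Real.log (π/2) := by
    rw [← Real.log_mul two_ne_zero (by positivity)]
    congr 1; ring
  have hAneg : A (π/4) < 0 := by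
    have : A (π/4) = (π/4) * (Real.log 2 + Real.log (π/4) - 1) := by
      simp only [A, Real.negMulLog]; ring
    rw [this, hlogsplit]
    have : Real.log (π/2) - 1 < 0 := by linarith
    nlinarith [hq]
  have : ∫ t in (0:ℝ)..(π/4), L t < 0 := by
    rw [hcalc, hA0] at hmono
    linarith
  have hΛ : Λ (π/4) = -∫ t in (0:ℝ)..(π/4), L t := rfl
  rw [hΛ]
  linarith

noncomputable def G (x : ℝ) : ℝ := Λ (π/4 + x) + Λ (π/4 - x)

noncomputable def k (x : ℝ) : ℝ :=
  Real.log (2 * Real.sin (π/4 - x)) - Real.log (2 * Real.sin (π/4 + x))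

lemma hasDerivAt_G {x : ℝ} (hx : |x| < π/4) : HasDerivAt G (k x) x := by
  rw [abs_lt] at hx
  have hq : 0 < π/4 := by positivity
  have h1 : HasDerivAt (fun x => Λ (π/4 + x)) (-Real.log (2 * Real.sin (π/4 + x)) * 1) x := by
    exact (hasDerivAt_Lambda (by linarith) (by linarith)).comp x
      ((hasDerivAt_id x).const_add (π/4))
  have h2 : HasDerivAt (fun x => Λ (π/4 - x)) (-Real.log (2 * Real.sin (π/4 - x)) * (-1)) x := by
    exact (hasDerivAt_Lambda (by linarith) (by linarith)).comp x
      ((hasDerivAt_id x).const_sub (π/4))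
  have := h1.add h2
  refine (this.congr_deriv ?_ : HasDerivAt G _ x)
  simp [k]; ring

lemma mem_sin_interval {x : ℝ} (hx : x ∈ Icc 0 (π/6)) :
    0 < Real.sin (π/4 - x) ∧ 0 < Real.sin (π/4 + x) := by
  have hpi := Real.pi_pos
  constructor
  · exact Real.sin_pos_of_pos_of_lt_pi (by nlinarith [hx.2]) (by nlinarith [hx.1])
  · exact Real.sin_pos_of_pos_of_lt_pi (by nlinarith [hx.1]) (by nlinarith [hx.2])

lemma abs_lt_of_mem {x : ℝ} (hx : x ∈ Icc 0 (π/6)) : |x| < π/4 := by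
  have hpi := Real.pi_pos
  rw [abs_lt]
  constructor <;> nlinarith [hx.1, hx.2]

lemma concaveG : ConcaveOn ℝ (Icc 0 (π/6)) G := by
  have hpi := Real.pi_pos
  apply AntitoneOn.concaveOn_of_deriv (convex_Icc _ _)
  · intro x hx
    exact (hasDerivAt_G (abs_lt_of_mem hx)).continuousAt.continuousWithinAt
  · rw [interior_Icc]
    intro x hx
    exact (hasDerivAt_G (abs_lt_of_mem (Ioo_subset_Icc_self hx))).differentiableAt.differentiableWithinAt
  · rw [interior_Icc]
    intro x hx y hy hxy
    rw [(hasDerivAt_G (abs_lt_of_mem (Ioo_subset_Icc_self hx))).deriv,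
      (hasDerivAt_G (abs_lt_of_mem (Ioo_subset_Icc_self hy))).deriv]
    have hx' := mem_sin_interval (Ioo_subset_Icc_self hx)
    have hy' := mem_sin_interval (Ioo_subset_Icc_self hy)
    have smono := Real.strictMonoOn_sin.monotoneOn
    have m1 : Real.sin (π/4 - y) ≤ Real.sin (π/4 - x) := by
      apply smono _ _ (by linarith)
      · constructor <;> [nlinarith [hy.1, hy.2]; nlinarith [hy.1, hy.2]]
      · constructor <;> [nlinarith [hx.1, hx.2]; nlinarith [hx.1, hx.2]]
    have m2 : Real.sin (π/4 + x) ≤ Real.sin (π/4 + y) := by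
      apply smono _ _ (by linarith)
      · constructor <;> [nlinarith [hx.1, hx.2]; nlinarith [hx.1, hx.2]]
      · constructor <;> [nlinarith [hy.1, hy.2]; nlinarith [hy.1, hy.2]]
    have l1 : Real.log (2 * Real.sin (π/4 - y)) ≤ Real.log (2 * Real.sin (π/4 - x)) := by
      rw [Real.log_le_log_iff (by nlinarith [hy'.1]) (by nlinarith [hx'.1])]
      linarith
    have l2 : Real.log (2 * Real.sin (π/4 + x)) ≤ Real.log (2 * Real.sin (π/4 + y)) := by
      rw [Real.log_le_log_iff (by nlinarith [hx'.2]) (by nlinarith [hy'.2])]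
      linarith
    simp only [k]
    linarith

lemma G0_pos : 0 < G 0 := by
  have := lambda_quarter_pos
  simp only [G, add_zero, sub_zero]
  linarith

end AntiprismAux

open AntiprismAux in
theorem antiprism_volume_strictMono (n : ℕ) (hn : 3 ≤ n) :
    2 * (n : ℝ) * (Λ (π / 4 + π / (2 * n)) + Λ (π / 4 - π / (2 * n))) <
      2 * ((n : ℝ) + 1) * (Λ (π / 4 + π / (2 * (n + 1))) + Λ (π / 4 - π / (2 * (n + 1)))) := by
  have hpi := Real.pi_pos
  have hn' : (3:ℝ) ≤ (n:ℝ) := by exact_mod_cast hn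
  set x : ℝ := π / (2 * (n:ℝ)) with hxdef
  set y : ℝ := π / (2 * ((n:ℝ) + 1)) with hydef
  have hnpos : (0:ℝ) < (n:ℝ) := by linarith
  have hx0 : 0 < x := by positivity
  have hy0 : 0 < y := by positivity
  have hxI : x ∈ Icc 0 (π/6) := by
    constructor
    · linarith
    · rw [hxdef, div_le_div_iff₀ (by positivity) (by norm_num)]
      nlinarith
  have hyI : y ∈ Icc 0 (π/6) := by
    constructor
    · linarith
    · rw [hydef, div_le_div_iff₀ (by positivity) (by norm_num)]
      nlinarith
  set a : ℝ := 1 - (n:ℝ)/((n:ℝ)+1) with hadef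
  set b : ℝ := (n:ℝ)/((n:ℝ)+1) with hbdef
  have ha : 0 < a := by
    rw [hadef]
    have : (n:ℝ)/((n:ℝ)+1) < 1 := by
      rw [div_lt_one (by linarith)]; linarith
    linarith
  have hb : 0 ≤ b := by positivity
  have hab : a + b = 1 := by ring
  have hkey := concaveG.2 (show (0:ℝ) ∈ Icc 0 (π/6) from ⟨le_rfl, by positivity⟩) hxI ha.le hb hab
  have hax : a • (0:ℝ) + b • x = y := by
    rw [smul_eq_mul, smul_eq_mul, hbdef, hxdef, hydef]
    field_simp
    ring
  rw [hax, smul_eq_mul, smul_eq_mul] at hkey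
  have hGy : b * G x < G y := by
    have : 0 < a * G 0 := mul_pos ha G0_pos
    linarith
  show 2 * (n:ℝ) * G x < 2 * ((n:ℝ) + 1) * G y
  have h1 : 2 * ((n:ℝ)+1) * (b * G x) < 2 * ((n:ℝ)+1) * G y :=
    mul_lt_mul_of_pos_left hGy (by linarith)
  have h2 : 2 * ((n:ℝ)+1) * (b * G x) = 2 * (n:ℝ) * G x := by
    rw [hbdef]; field_simp
  linarith
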